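/- arXiv:1803.03621 — 2 statements merged into one kernel-verified Lean document; each statement's English description precedes it below -/
import Mathlib

section
/- Let ν_1, …, ν_m be probability measures on a finite group G with ‖ν_k − μ‖_TV ≤ ε_k (μ uniform). With D_k = X_k⋯X_1 for independent X_k ∼ ν_k, let ν̃ be the law of (D_1,…,D_m) and T : M_d → M_d a quantum channel with a unitary representation U : G → U(d). Then ‖𝒯_{ν̃,m}(T) − 𝒯(T)^m‖_{1→1} ≤ 4·sqrt( (log|G|/(1−|G|^{-1})) · Σ_{k=1}^m ε_k ). -/
open scoped Matrix ComplexOrder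
open Matrix

noncomputable section

variable {d : ℕ}

/-- The space of d×d complex matrices. -/
abbrev Md (d : ℕ) := Matrix (Fin d) (Fin d) ℂ

/-- Choi matrix of a linear map on `Md d`. -/
def choiMatrix (T : Md d →ₗ[ℂ] Md d) :
    Matrix (Fin d × Fin d) (Fin d × Fin d) ℂ :=
  fun p q => (T (Matrix.single p.1 q.1 1)) p.2 q.2

/-- Complete positivity via positive semidefiniteness of the Choi matrix. -/
def IsCompletelyPositive (T : Md d →ₗ[ℂ] Md d) : Prop :=
  (choiMatrix T).PosSemidef

/-- Trace preserving. -/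
def IsTracePreserving (T : Md d →ₗ[ℂ] Md d) : Prop :=
  ∀ X : Md d, (T X).trace = X.trace

/-- A quantum channel is a completely positive trace-preserving linear map. -/
def IsQuantumChannel (T : Md d →ₗ[ℂ] Md d) : Prop :=
  IsCompletelyPositive T ∧ IsTracePreserving T

/-- Density matrix. -/
def IsDensityMatrix (ρ : Md d) : Prop := ρ.PosSemidef ∧ ρ.trace = 1

/-- POVM element: `0 ≤ E ≤ I`. -/
def IsPOVMElement (E : Md d) : Prop := E.PosSemidef ∧ (1 - E).PosSemidef

/-- The maximally entangled vector `|Ω⟩ = d^{-1/2} ∑ᵢ |i⟩⊗|i⟩`. -/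
def maxEnt (d : ℕ) : Fin d × Fin d → ℂ :=
  fun p => if p.1 = p.2 then ((Real.sqrt d : ℂ))⁻¹ else 0

/-- The projection `|Ω⟩⟨Ω|`. -/
def omegaProj (d : ℕ) : Matrix (Fin d × Fin d) (Fin d × Fin d) ℂ :=
  fun p q => maxEnt d p * star (maxEnt d q)

/-- The action of `T ⊗ id` on matrices over `Fin d × Fin d`. -/
def tensorId (T : Md d →ₗ[ℂ] Md d)
    (M : Matrix (Fin d × Fin d) (Fin d × Fin d) ℂ) :
    Matrix (Fin d × Fin d) (Fin d × Fin d) ℂ :=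
  fun p q => ∑ i : Fin d, ∑ k : Fin d,
    (T (Matrix.single i k 1)) p.1 q.1 * M (i, p.2) (k, q.2)

/-- Entanglement fidelity `⟨Ω| (T ⊗ id)(|Ω⟩⟨Ω|) |Ω⟩`. -/
def entFidelity (T : Md d →ₗ[ℂ] Md d) : ℂ :=
  ∑ p : Fin d × Fin d, ∑ q : Fin d × Fin d,
    star (maxEnt d p) * (tensorId T (omegaProj d)) p q * maxEnt d q

/-- Conjugation map `X ↦ A X Aᴴ` as a linear map on matrices. -/
def conjMap (A : Md d) : Md d →ₗ[ℂ] Md d where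
  toFun X := A * X * Aᴴ
  map_add' X Y := by simp [Matrix.mul_add, Matrix.add_mul]
  map_smul' c X := by simp [Matrix.mul_smul, Matrix.smul_mul]

variable {G : Type*} [Group G] [Fintype G]

/-- A unitary representation of `G` on `ℂ^d`: a monoid hom into the unitary group. -/
abbrev UnitaryRep (G : Type*) [Group G] (d : ℕ) :=
  G →* Matrix.unitaryGroup (Fin d) ℂ

/-- The Haar (uniform) twirl of a linear map. -/
def twirl (U : UnitaryRep G d) (T : Md d →ₗ[ℂ] Md d) : Md d →ₗ[ℂ] Md d :=
  (Fintype.card G : ℂ)⁻¹ •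
    ∑ g : G, conjMap ((U g : Md d))ᴴ ∘ₗ T ∘ₗ conjMap (U g : Md d)

/-- Covariance of `T` w.r.t. the representation `U`. -/
def IsCovariant (U : UnitaryRep G d) (T : Md d →ₗ[ℂ] Md d) : Prop :=
  ∀ (g : G) (X : Md d),
    T ((U g : Md d) * X * (U g : Md d)ᴴ) = (U g : Md d) * T X * (U g : Md d)ᴴ

end

noncomputable section
variable {d : ℕ} {G : Type*} [Group G] [Fintype G]

/-- One step `𝒰_g ∘ T ∘ 𝒰_g*` of a twirled sequence, as an endomorphism of `Md d`. -/
def seqStep (U : UnitaryRep G d) (T : Md d →ₗ[ℂ] Md d) (g : G) :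
    Module.End ℂ (Md d) :=
  (conjMap ((U g : Md d)) : Module.End ℂ (Md d)) * T * conjMap ((U g : Md d))ᴴ

/-- The `ν̃`-twirl to the power `m`:
`𝒯_{ν̃,m}(T) = ∑ ν̃(g₁,…,g_m) ∘ₖ (𝒰_{g_k} ∘ T ∘ 𝒰_{g_k}*)`. -/
def nuTwirl {m : ℕ} (U : UnitaryRep G d) (T : Md d →ₗ[ℂ] Md d)
    (ν : (Fin m → G) → ℝ) : Module.End ℂ (Md d) :=
  ∑ f : Fin m → G, (ν f : ℂ) • (List.ofFn fun k : Fin m => seqStep U T (f k)).prod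

/-- Total variation distance between two probability mass functions on a finite type. -/
def tvDist {S : Type*} [Fintype S] (μ ν : S → ℝ) : ℝ :=
  (1 / 2) * ∑ s : S, |μ s - ν s|

/-- A probability mass function. -/
def IsProb {S : Type*} [Fintype S] (ν : S → ℝ) : Prop :=
  (∀ s, 0 ≤ ν s) ∧ ∑ s : S, ν s = 1

/-- The law of `(D₁,…,D_m)` where `D_k = X_k ⋯ X₁` and the `X_k` are independent
with laws `ν k`. -/
def walkLaw {m : ℕ} (ν : Fin m → G → ℝ) (h : Fin m → G) : ℝ :=
  ∏ k : Fin m,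
    ν k (h k * (if _hk : (k : ℕ) = 0 then (1 : G)
      else (h ⟨(k : ℕ) - 1, Nat.lt_of_le_of_lt (Nat.sub_le _ _) k.isLt⟩)⁻¹))

/-- The uniform (Haar) pmf on a finite type. -/
def uniformPMF (S : Type*) [Fintype S] : S → ℝ := fun _ => (Fintype.card S : ℝ)⁻¹

/-- The Schatten 1-norm (trace norm) of a matrix: `Tr √(AᴴA)`. -/
def traceNorm (A : Md d) : ℝ :=
  ((Matrix.posSemidef_conjTranspose_mul_self A).1.eigenvectorUnitary.1 *
    Matrix.diagonal (((↑) : ℝ → ℂ) ∘ (Real.sqrt ∘ (Matrix.posSemidef_conjTranspose_mul_self A).1.eigenvalues)) *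
    (star (Matrix.posSemidef_conjTranspose_mul_self A).1.eigenvectorUnitary : Md d)).trace.re

/-- The induced `1→1` norm of a linear map on matrices. -/
def norm11 (Φ : Md d →ₗ[ℂ] Md d) : ℝ :=
  sSup {c : ℝ | ∃ X : Md d, X ≠ 0 ∧ c = traceNorm (Φ X) / traceNorm X}

end

section PsdSqrt
open scoped MatrixOrder
variable {n : Type*} [Fintype n] [DecidableEq n]

/-- The spectral square root of a positive semidefinite matrix. -/
noncomputable def Matrix.PosSemidef.sqrt {A : Matrix n n ℂ} (hA : A.PosSemidef) : Matrix n n ℂ :=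
  hA.1.eigenvectorUnitary.1 * Matrix.diagonal (((↑) : ℝ → ℂ) ∘ (Real.sqrt ∘ hA.1.eigenvalues)) *
    (star hA.1.eigenvectorUnitary : Matrix n n ℂ)

lemma Matrix.PosSemidef.posSemidef_sqrt {A : Matrix n n ℂ} (hA : A.PosSemidef) :
    hA.sqrt.PosSemidef := by
  unfold Matrix.PosSemidef.sqrt
  have h : (Matrix.diagonal (((↑) : ℝ → ℂ) ∘ (Real.sqrt ∘ hA.1.eigenvalues))).PosSemidef :=
    Matrix.posSemidef_diagonal_iff.mpr fun i => Complex.zero_le_real.mpr (Real.sqrt_nonneg _)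
  exact h.mul_mul_conjTranspose_same _

lemma Matrix.PosSemidef.sq_sqrt {A : Matrix n n ℂ} (hA : A.PosSemidef) : hA.sqrt ^ 2 = A := by
  set U := hA.1.eigenvectorUnitary with hUdef
  have hU : (star U : Matrix n n ℂ) * (U : Matrix n n ℂ) = 1 := by
    have h := (Matrix.mem_unitaryGroup_iff').mp U.2
    exact h
  have hspec : A = (U : Matrix n n ℂ) * diagonal (((↑) : ℝ → ℂ) ∘ hA.1.eigenvalues) *
      (star U : Matrix n n ℂ) :=
    hA.1.spectral_theorem.trans (Unitary.conjStarAlgAut_apply _ _)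
  have key : ∀ X Y : Matrix n n ℂ,
      ((U : Matrix n n ℂ) * X * (star U : Matrix n n ℂ)) * ((U : Matrix n n ℂ) * Y * (star U : Matrix n n ℂ))
        = (U : Matrix n n ℂ) * (X * Y) * (star U : Matrix n n ℂ) := by
    intro X Y
    calc _ = (U : Matrix n n ℂ) * X * ((star U : Matrix n n ℂ) * (U : Matrix n n ℂ)) * Y
            * (star U : Matrix n n ℂ) := by simp only [Matrix.mul_assoc]
      _ = _ := by rw [hU, Matrix.mul_one, Matrix.mul_assoc (U : Matrix n n ℂ)]
  rw [sq]
  unfold Matrix.PosSemidef.sqrt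
  conv_rhs => rw [hspec]
  rw [key]
  refine congrArg (fun D => (U : Matrix n n ℂ) * D * (star U : Matrix n n ℂ)) ?_
  rw [Matrix.diagonal_mul_diagonal]
  congr 1
  funext i
  simp only [Function.comp_apply]
  exact_mod_cast Real.mul_self_sqrt (hA.eigenvalues_nonneg i)

lemma Matrix.PosSemidef.eq_sqrt_of_sq_eq {B A : Matrix n n ℂ} (hB : B.PosSemidef)
    (hA : A.PosSemidef) (h : B ^ 2 = A) : B = hA.sqrt := by
  have h1 : CFC.sqrt A = B := CFC.sqrt_unique (by rw [← sq, h]) hB.nonneg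
  have h2 : CFC.sqrt A = hA.sqrt :=
    CFC.sqrt_unique (by rw [← sq, hA.sq_sqrt]) hA.posSemidef_sqrt.nonneg
  rw [← h1, h2]

end PsdSqrt

lemma traceNorm_eq_sqrt {d : ℕ} (A : Md d) :
    traceNorm A = ((Matrix.posSemidef_conjTranspose_mul_self A).sqrt).trace.re := rfl

noncomputable section TraceNormCore
open Matrix
variable {d : ℕ}

private lemma sqrt_congr' {A B : Md d} (hA : A.PosSemidef) (hB : B.PosSemidef)
    (h : A = B) : hA.sqrt = hB.sqrt := by subst h; rfl

lemma traceNorm_congr {A B : Md d} (h : Aᴴ * A = Bᴴ * B) : traceNorm A = traceNorm B := by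
  simp only [traceNorm_eq_sqrt]
  rw [sqrt_congr' (posSemidef_conjTranspose_mul_self A) (posSemidef_conjTranspose_mul_self B) h]

lemma psd_diag_re {A : Md d} (hA : A.PosSemidef) (i : Fin d) : 0 ≤ (A i i).re := by
  exact (Complex.nonneg_iff.mp hA.diag_nonneg).1

lemma re_trace_nonneg {A : Md d} (hA : A.PosSemidef) : 0 ≤ A.trace.re := by
  have : A.trace.re = ∑ i, (A i i).re := by
    simp [Matrix.trace, Matrix.diag, Complex.re_sum]
  rw [this]
  exact Finset.sum_nonneg fun i _ => psd_diag_re hA i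

lemma traceNorm_nonneg (A : Md d) : 0 ≤ traceNorm A :=
  re_trace_nonneg (posSemidef_conjTranspose_mul_self A).posSemidef_sqrt

/-- An operator-norm contraction, expressed algebraically. -/
def Contraction (C : Md d) : Prop := (1 - Cᴴ * C).PosSemidef

lemma contraction_of_mem_unitary {U : Md d} (hU : U ∈ Matrix.unitaryGroup (Fin d) ℂ) :
    Contraction U := by
  have h : Uᴴ * U = 1 := by
    simpa [Matrix.star_eq_conjTranspose] using (Matrix.mem_unitaryGroup_iff').mp hU
  unfold Contraction
  rw [h, sub_self]
  exact Matrix.PosSemidef.zero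

lemma contraction_unitary (V : Matrix.unitaryGroup (Fin d) ℂ) : Contraction (V : Md d) :=
  contraction_of_mem_unitary V.2

lemma contraction_unitary_star (V : Matrix.unitaryGroup (Fin d) ℂ) :
    Contraction ((V : Md d)ᴴ) := by
  have := contraction_of_mem_unitary (star V).2
  simpa [Matrix.star_eq_conjTranspose] using this

lemma contraction_mul {C D : Md d} (hC : Contraction C) (hD : Contraction D) :
    Contraction (C * D) := by
  have key : 1 - (C * D)ᴴ * (C * D) = Dᴴ * (1 - Cᴴ * C) * D + (1 - Dᴴ * D) := by
    rw [Matrix.conjTranspose_mul]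
    noncomm_ring
  unfold Contraction
  rw [key]
  exact (hC.conjTranspose_mul_mul_same D).add hD

lemma projection_one_sub_psd {P : Md d} (hP : P.IsHermitian) (hidem : P * P = P) :
    (1 - P).PosSemidef := by
  have h : 1 - P = (1 - P)ᴴ * (1 - P) := by
    rw [Matrix.conjTranspose_sub, Matrix.conjTranspose_one, hP.eq]
    rw [Matrix.mul_sub, Matrix.sub_mul, Matrix.sub_mul, hidem]
    simp
  rw [h]
  exact posSemidef_conjTranspose_mul_self _

lemma contraction_diag_abs_le {C : Md d} (hC : Contraction C) (i : Fin d) :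
    ‖C i i‖ ≤ 1 := by
  have h0 := psd_diag_re hC i
  have h1 : ((Cᴴ * C) i i).re = ∑ k, Complex.normSq (C k i) := by
    simp [Matrix.mul_apply, Matrix.conjTranspose_apply, Complex.re_sum,
      Complex.normSq_eq_conj_mul_self, Complex.normSq_apply]
  have h2 : ((1 - Cᴴ * C) i i).re = 1 - ((Cᴴ * C) i i).re := by
    simp [Matrix.sub_apply, Matrix.one_apply]
  have h3 : Complex.normSq (C i i) ≤ ∑ k, Complex.normSq (C k i) :=
    Finset.single_le_sum (f := fun k => Complex.normSq (C k i))
      (fun k _ => Complex.normSq_nonneg _) (Finset.mem_univ i)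
  have h4 : Complex.normSq (C i i) ≤ 1 := by
    rw [h2, h1] at h0; linarith
  have h5 : ‖C i i‖ ^ 2 ≤ 1 := by rw [Complex.sq_norm]; exact h4
  nlinarith [norm_nonneg (C i i)]

section UnitaryConj
variable (V : Matrix.unitaryGroup (Fin d) ℂ)

lemma coe_star_mul_coe : (V : Md d)ᴴ * (V : Md d) = 1 := by
  simpa [Matrix.star_eq_conjTranspose] using (Matrix.mem_unitaryGroup_iff').mp V.2

lemma coe_mul_coe_star : (V : Md d) * (V : Md d)ᴴ = 1 := by
  simpa [Matrix.star_eq_conjTranspose] using (Matrix.mem_unitaryGroup_iff).mp V.2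

lemma unitary_conj_mul (e f : Fin d → ℂ) :
    ((V : Md d) * diagonal e * (V : Md d)ᴴ) * ((V : Md d) * diagonal f * (V : Md d)ᴴ)
      = (V : Md d) * diagonal (fun i => e i * f i) * (V : Md d)ᴴ := by
  have h : (V : Md d) * diagonal e * ((V : Md d)ᴴ * (V : Md d)) * diagonal f * (V : Md d)ᴴ
      = (V : Md d) * (diagonal e * diagonal f) * (V : Md d)ᴴ := by
    rw [coe_star_mul_coe]
    simp [Matrix.mul_assoc]
  calc ((V : Md d) * diagonal e * (V : Md d)ᴴ) * ((V : Md d) * diagonal f * (V : Md d)ᴴ)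
      = (V : Md d) * diagonal e * ((V : Md d)ᴴ * (V : Md d)) * diagonal f * (V : Md d)ᴴ := by
        simp [Matrix.mul_assoc]
    _ = (V : Md d) * (diagonal e * diagonal f) * (V : Md d)ᴴ := h
    _ = (V : Md d) * diagonal (fun i => e i * f i) * (V : Md d)ᴴ := by
        rw [Matrix.diagonal_mul_diagonal]

lemma unitary_conj_conjT (e : Fin d → ℂ) :
    ((V : Md d) * diagonal e * (V : Md d)ᴴ)ᴴ
      = (V : Md d) * diagonal (fun i => star (e i)) * (V : Md d)ᴴ := by
  simp [Matrix.conjTranspose_mul, Matrix.diagonal_conjTranspose, Matrix.mul_assoc]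
  rfl

lemma unitary_conj_trace (D : Md d) :
    ((V : Md d) * D * (V : Md d)ᴴ).trace = D.trace := by
  rw [Matrix.trace_mul_comm, ← Matrix.mul_assoc, coe_star_mul_coe, Matrix.one_mul]

lemma unitary_conj_psd {e : Fin d → ℝ} (he : ∀ i, 0 ≤ e i) :
    ((V : Md d) * diagonal (fun i => (e i : ℂ)) * (V : Md d)ᴴ).PosSemidef := by
  refine Matrix.PosSemidef.mul_mul_conjTranspose_same ?_ (V : Md d)
  refine Matrix.posSemidef_diagonal_iff.mpr fun i => ?_
  exact_mod_cast Complex.zero_le_real.mpr (he i)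

lemma unitary_conj_one :
    (V : Md d) * diagonal (fun _ => (1 : ℂ)) * (V : Md d)ᴴ = 1 := by
  rw [Matrix.diagonal_one, Matrix.mul_one, coe_mul_coe_star]

end UnitaryConj

end TraceNormCore
noncomputable section PolarCore
open Matrix
variable {d : ℕ}

theorem polar_exists (A : Md d) : ∃ W : Md d, Contraction W ∧ Contraction Wᴴ ∧
    A = W * (Matrix.posSemidef_conjTranspose_mul_self A).sqrt ∧
    Wᴴ * A = (Matrix.posSemidef_conjTranspose_mul_self A).sqrt := by
  classical
  set hAA := Matrix.posSemidef_conjTranspose_mul_self A with hAAdef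
  set hH : (Aᴴ * A).IsHermitian := hAA.1 with hHdef
  set V : Matrix.unitaryGroup (Fin d) ℂ := hH.eigenvectorUnitary with hV
  set lam : Fin d → ℝ := hH.eigenvalues with hlam
  have hlam0 : ∀ i, 0 ≤ lam i := fun i => hAA.eigenvalues_nonneg i
  set Γ : (Fin d → ℂ) → Md d := fun e => (V : Md d) * diagonal e * (V : Md d)ᴴ with hΓ
  have Γmul : ∀ e f, Γ e * Γ f = Γ (fun i => e i * f i) := fun e f => unitary_conj_mul V e f
  have ΓconjT : ∀ e, (Γ e)ᴴ = Γ (fun i => star (e i)) := fun e => unitary_conj_conjT V e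
  set σc : Fin d → ℂ := fun i => (Real.sqrt (lam i) : ℂ) with hσc
  set dinv : Fin d → ℂ := fun i => if lam i = 0 then 0 else (σc i)⁻¹ with hdinv
  set ind : Fin d → ℂ := fun i => if lam i = 0 then 0 else 1 with hind
  have hσc_ne : ∀ i, lam i ≠ 0 → σc i ≠ 0 := by
    intro i hi
    simp only [hσc, ne_eq, Complex.ofReal_eq_zero]
    intro h
    exact hi (le_antisymm (Real.sqrt_eq_zero'.mp h) (hlam0 i))
  have sqrt_eq : hAA.sqrt = Γ σc := rfl
  have spec : Aᴴ * A = Γ (fun i => (lam i : ℂ)) := by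
    have := hH.spectral_theorem
    rw [this]
    rfl
  set W : Md d := A * Γ dinv with hW
  -- pointwise facts
  have star_dinv : ∀ i, star (dinv i) = dinv i := by
    intro i
    by_cases h : lam i = 0 <;> simp [hdinv, h, hσc, ← Complex.ofReal_inv]
  have f2 : (fun i => star (dinv i) * ((lam i : ℂ) * dinv i)) = ind := by
    funext i
    by_cases h : lam i = 0
    · simp [hdinv, hind, h]
    · have hσ : σc i * σc i = (lam i : ℂ) := by
        simp only [hσc, ← Complex.ofReal_mul, Real.mul_self_sqrt (hlam0 i)]
      rw [star_dinv]
      simp only [hdinv, hind, if_neg h, ← hσ]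
      field_simp
      exact div_self (hσc_ne i h)
  -- W^H W = Γ ind
  have hWHW : Wᴴ * W = Γ ind := by
    have h1 : Wᴴ * W = (Γ dinv)ᴴ * ((Aᴴ * A) * Γ dinv) := by
      rw [hW, Matrix.conjTranspose_mul]
      simp [Matrix.mul_assoc]
    rw [h1, spec, ΓconjT, Γmul, Γmul]
    exact congrArg Γ (funext fun i => by simpa using congrFun f2 i)
  have hPidem : Γ ind * Γ ind = Γ ind := by
    rw [Γmul]
    exact congrArg Γ (funext fun i => by by_cases h : lam i = 0 <;> simp [hind, h])
  have hPherm : (Γ ind).IsHermitian := by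
    show (Γ ind)ᴴ = Γ ind
    rw [ΓconjT]
    exact congrArg Γ (funext fun i => by by_cases h : lam i = 0 <;> simp [hind, h])
  have hContrW : Contraction W := by
    unfold Contraction
    rw [hWHW]
    exact projection_one_sub_psd hPherm hPidem
  -- A * Γ ind = A
  have hAind : A * Γ ind = A := by
    have hone : Γ (fun _ => 1) = 1 := unitary_conj_one V
    have hadd : Γ ind + Γ (fun i => 1 - ind i) = 1 := by
      have h1 : Γ ind + Γ (fun i => 1 - ind i)
          = (V : Md d) * (diagonal ind + diagonal (fun i => 1 - ind i)) * (V : Md d)ᴴ := by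
        simp only [hΓ, Matrix.mul_add, Matrix.add_mul]
      rw [h1, Matrix.diagonal_add, ← hone]
      exact congrArg (fun D => (V : Md d) * diagonal D * (V : Md d)ᴴ)
        (funext fun i => by ring)
    set Z : Md d := A * Γ (fun i => 1 - ind i) with hZ
    have hZzero : Z = 0 := by
      have hZZ : Zᴴ * Z = Γ (fun i => star (1 - ind i) * ((lam i : ℂ) * (1 - ind i))) := by
        have h1 : Zᴴ * Z = (Γ (fun i => 1 - ind i))ᴴ * ((Aᴴ * A) * Γ (fun i => 1 - ind i)) := by
          rw [hZ, Matrix.conjTranspose_mul]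
          simp [Matrix.mul_assoc]
        rw [h1, spec, ΓconjT, Γmul, Γmul]
      have hzero : (fun i => star (1 - ind i) * ((lam i : ℂ) * (1 - ind i))) = fun _ => 0 := by
        funext i
        by_cases h : lam i = 0 <;> simp [hind, h]
      rw [hzero] at hZZ
      have : Γ (fun _ => (0 : ℂ)) = 0 := by
        simp [hΓ, Matrix.diagonal_zero]
      rw [this] at hZZ
      exact Matrix.conjTranspose_mul_self_eq_zero.mp hZZ
    have : A * (Γ ind + Γ (fun i => 1 - ind i)) = A * 1 := by rw [hadd]
    rw [Matrix.mul_add, ← hZ, hZzero, add_zero, Matrix.mul_one] at this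
    exact this
  -- A = W * sqrt
  have hpolar : A = W * hAA.sqrt := by
    rw [sqrt_eq, hW, Matrix.mul_assoc, Γmul]
    have : (fun i => dinv i * σc i) = ind := by
      funext i
      by_cases h : lam i = 0
      · simp [hdinv, hind, hσc, h]
      · simp only [hdinv, hind, if_neg h]
        exact inv_mul_cancel₀ (hσc_ne i h)
    rw [show Γ (fun i => dinv i * σc i) = Γ ind from congrArg Γ this, hAind]
  -- contraction of Wᴴ
  have hWind : W * Γ ind = W := by
    rw [hW, Matrix.mul_assoc, Γmul]
    have hx : Γ (fun i => dinv i * ind i) = Γ dinv :=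
      congrArg Γ (funext fun i => by by_cases h : lam i = 0 <;> simp [hdinv, hind, h])
    rw [hx]
  have hQidem : (W * Wᴴ) * (W * Wᴴ) = W * Wᴴ := by
    have h1 : (W * Wᴴ) * (W * Wᴴ) = W * (Wᴴ * W) * Wᴴ := by
      simp only [Matrix.mul_assoc]
    rw [h1, hWHW, hWind]
  have hContrWH : Contraction Wᴴ := by
    unfold Contraction
    rw [Matrix.conjTranspose_conjTranspose]
    exact projection_one_sub_psd (Matrix.isHermitian_mul_conjTranspose_self W) hQidem
  -- attainment
  have hattain : Wᴴ * A = hAA.sqrt := by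
    conv_lhs => rw [hpolar]
    rw [← Matrix.mul_assoc, hWHW, sqrt_eq, Γmul]
    exact congrArg Γ (funext fun i => by by_cases h : lam i = 0 <;> simp [hind, hσc, h])
  exact ⟨W, hContrW, hContrWH, hpolar, hattain⟩

end PolarCore
noncomputable section TraceNormIneq
open Matrix
variable {d : ℕ}

lemma trace_mul_diagonal' (M : Md d) (v : Fin d → ℂ) :
    (M * Matrix.diagonal v).trace = ∑ i, M i i * v i := by
  simp [Matrix.trace, Matrix.diag, Matrix.mul_diagonal]

lemma re_trace_mul_psd_le {N R : Md d} (hN : Contraction N) (hR : R.PosSemidef) :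
    (N * R).trace.re ≤ R.trace.re := by
  set V := hR.1.eigenvectorUnitary with hV
  set μ := hR.1.eigenvalues with hμ
  have spec : R = (V : Md d) * diagonal (fun i => (μ i : ℂ)) * (V : Md d)ᴴ := by
    have h := hR.1.spectral_theorem
    rw [h]
    rfl
  have hμ0 : ∀ i, 0 ≤ μ i := fun i => hR.eigenvalues_nonneg i
  have htrR : R.trace.re = ∑ i, μ i := by
    rw [spec, unitary_conj_trace, Matrix.trace_diagonal, Complex.re_sum]
    simp
  have h1 : N * R = ((N * (V : Md d)) * diagonal (fun i => (μ i : ℂ))) * (V : Md d)ᴴ := by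
    rw [spec]
    simp [Matrix.mul_assoc]
  have h2 : (N * R).trace = (((V : Md d)ᴴ * N * (V : Md d)) * diagonal (fun i => (μ i : ℂ))).trace := by
    rw [h1, Matrix.trace_mul_comm]
    simp [Matrix.mul_assoc]
  set M := (V : Md d)ᴴ * N * (V : Md d) with hM
  have hMcontr : Contraction M :=
    contraction_mul (contraction_mul (contraction_unitary_star V) hN) (contraction_unitary V)
  rw [h2, trace_mul_diagonal', Complex.re_sum, htrR]
  refine Finset.sum_le_sum fun i _ => ?_
  have h3 : (M i i * (μ i : ℂ)).re = (M i i).re * μ i := by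
    simp [Complex.mul_re]
  rw [h3]
  have h4 : (M i i).re ≤ 1 :=
    le_trans (Complex.re_le_norm _) (contraction_diag_abs_le hMcontr i)
  nlinarith [hμ0 i]

lemma traceNorm_dual_le {C A : Md d} (hC : Contraction C) :
    (C * A).trace.re ≤ traceNorm A := by
  obtain ⟨W, hW, -, hpolar, -⟩ := polar_exists A
  have h1 : C * A = (C * W) * (Matrix.posSemidef_conjTranspose_mul_self A).sqrt := by
    conv_lhs => rw [hpolar]
    rw [Matrix.mul_assoc]
  rw [h1]
  exact re_trace_mul_psd_le (contraction_mul hC hW)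
    (Matrix.posSemidef_conjTranspose_mul_self A).posSemidef_sqrt

lemma traceNorm_add_le (A B : Md d) : traceNorm (A + B) ≤ traceNorm A + traceNorm B := by
  obtain ⟨W, -, hW', -, hatt⟩ := polar_exists (A + B)
  have h : (Wᴴ * (A + B)).trace.re = traceNorm (A + B) :=
    congrArg (fun M : Md d => M.trace.re) hatt
  rw [← h, Matrix.mul_add, Matrix.trace_add, Complex.add_re]
  exact add_le_add (traceNorm_dual_le hW') (traceNorm_dual_le hW')

lemma traceNorm_conjTranspose (A : Md d) : traceNorm Aᴴ = traceNorm A := by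
  have key : ∀ B : Md d, traceNorm Bᴴ ≤ traceNorm B := by
    intro B
    obtain ⟨W, hW, -, -, hatt⟩ := polar_exists Bᴴ
    have h : (Wᴴ * Bᴴ).trace.re = traceNorm Bᴴ :=
      congrArg (fun M : Md d => M.trace.re) hatt
    rw [← h, ← Matrix.conjTranspose_mul, Matrix.trace_conjTranspose]
    have h2 : (star (B * W).trace).re = ((B * W).trace).re := by
      simp [Complex.star_def]
    rw [h2, Matrix.trace_mul_comm]
    exact traceNorm_dual_le hW
  refine le_antisymm (key A) ?_
  have := key Aᴴ
  rwa [Matrix.conjTranspose_conjTranspose] at this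

lemma traceNorm_neg (A : Md d) : traceNorm (-A) = traceNorm A :=
  traceNorm_congr (by simp)

lemma traceNorm_zero : traceNorm (0 : Md d) = 0 := by
  have h0 : (0 : Md d) = (Matrix.posSemidef_conjTranspose_mul_self (0 : Md d)).sqrt :=
    Matrix.PosSemidef.zero.eq_sqrt_of_sq_eq _ (by simp [pow_two])
  simp only [traceNorm_eq_sqrt]
  rw [← h0]
  simp

lemma psd_real_smul {S : Md d} (hS : S.PosSemidef) {t : ℝ} (ht : 0 ≤ t) :
    ((t : ℂ) • S).PosSemidef := by
  exact hS.smul (Complex.zero_le_real.mpr ht)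

lemma traceNorm_smul (c : ℂ) (A : Md d) :
    traceNorm (c • A) = ‖c‖ * traceNorm A := by
  set S := (Matrix.posSemidef_conjTranspose_mul_self A).sqrt with hSdef
  have hSp := (Matrix.posSemidef_conjTranspose_mul_self A).posSemidef_sqrt
  have hB : (((‖c‖ : ℝ) : ℂ) • S).PosSemidef :=
    psd_real_smul hSp (norm_nonneg c)
  have hsq : (((‖c‖ : ℝ) : ℂ) • S) ^ 2 = (c • A)ᴴ * (c • A) := by
    rw [smul_pow, (Matrix.posSemidef_conjTranspose_mul_self A).sq_sqrt,
      Matrix.conjTranspose_smul, Matrix.smul_mul, Matrix.mul_smul, smul_smul]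
    congr 1
    rw [Complex.star_def, ← Complex.normSq_eq_conj_mul_self, ← Complex.ofReal_pow,
      Complex.sq_norm]
  have heq := hB.eq_sqrt_of_sq_eq (Matrix.posSemidef_conjTranspose_mul_self (c • A)) hsq
  simp only [traceNorm_eq_sqrt]
  rw [← heq, Matrix.trace_smul]
  simp [Complex.mul_re, hSdef]

lemma traceNorm_sum_le {ι : Type*} (s : Finset ι) (F : ι → Md d) :
    traceNorm (∑ i ∈ s, F i) ≤ ∑ i ∈ s, traceNorm (F i) := by
  classical
  induction s using Finset.induction_on with
  | empty => simp [traceNorm_zero]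
  | @insert a s ha ih =>
    rw [Finset.sum_insert ha, Finset.sum_insert ha]
    exact le_trans (traceNorm_add_le _ _) (by linarith)

lemma traceNorm_psd {ρ : Md d} (hρ : ρ.PosSemidef) : traceNorm ρ = ρ.trace.re := by
  have h := hρ.eq_sqrt_of_sq_eq (Matrix.posSemidef_conjTranspose_mul_self ρ)
    (by rw [pow_two, hρ.1.eq])
  simp only [traceNorm_eq_sqrt]
  rw [← h]

lemma traceNorm_hermitian {H : Md d} (hH : H.IsHermitian) :
    traceNorm H = ∑ i, |hH.eigenvalues i| := by
  set V := hH.eigenvectorUnitary with hV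
  set lam := hH.eigenvalues with hlam
  have spec : H = (V : Md d) * diagonal (fun i => (lam i : ℂ)) * (V : Md d)ᴴ := by
    have h := hH.spectral_theorem
    rw [h]
    rfl
  have hS : ((V : Md d) * diagonal (fun i => ((|lam i| : ℝ) : ℂ)) * (V : Md d)ᴴ).PosSemidef :=
    unitary_conj_psd V (fun i => abs_nonneg _)
  have hsq : ((V : Md d) * diagonal (fun i => ((|lam i| : ℝ) : ℂ)) * (V : Md d)ᴴ) ^ 2
      = Hᴴ * H := by
    rw [pow_two, unitary_conj_mul, hH.eq]
    conv_rhs => rw [spec]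
    rw [unitary_conj_mul]
    refine congrArg (fun e => (V : Md d) * diagonal e * (V : Md d)ᴴ) (funext fun i => ?_)
    rw [← Complex.ofReal_mul, ← Complex.ofReal_mul, abs_mul_abs_self]
  have heq := hS.eq_sqrt_of_sq_eq (Matrix.posSemidef_conjTranspose_mul_self H) hsq
  simp only [traceNorm_eq_sqrt]
  rw [← heq, unitary_conj_trace, Matrix.trace_diagonal, Complex.re_sum]
  simp

lemma jordan_decomp {H : Md d} (hH : H.IsHermitian) :
    ∃ P N : Md d, P.PosSemidef ∧ N.PosSemidef ∧ H = P - N ∧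
      P.trace.re + N.trace.re = traceNorm H := by
  set V := hH.eigenvectorUnitary with hV
  set lam := hH.eigenvalues with hlam
  have spec : H = (V : Md d) * diagonal (fun i => (lam i : ℂ)) * (V : Md d)ᴴ := by
    have h := hH.spectral_theorem
    rw [h]
    rfl
  refine ⟨(V : Md d) * diagonal (fun i => ((max (lam i) 0 : ℝ) : ℂ)) * (V : Md d)ᴴ,
    (V : Md d) * diagonal (fun i => ((max (-lam i) 0 : ℝ) : ℂ)) * (V : Md d)ᴴ,
    unitary_conj_psd V (fun i => le_max_right _ _),
    unitary_conj_psd V (fun i => le_max_right _ _), ?_, ?_⟩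
  · rw [spec, ← Matrix.sub_mul, ← Matrix.mul_sub, Matrix.diagonal_sub]
    refine congrArg (fun e => (V : Md d) * diagonal e * (V : Md d)ᴴ) (funext fun i => ?_)
    rw [← Complex.ofReal_sub]
    congr 1
    rcases le_total (lam i) 0 with h | h
    · simp [max_eq_right h, max_eq_left (neg_nonneg.mpr h)]
    · simp [max_eq_left h, max_eq_right (neg_nonpos.mpr h)]
  · rw [traceNorm_hermitian hH, unitary_conj_trace, unitary_conj_trace,
      Matrix.trace_diagonal, Matrix.trace_diagonal, Complex.re_sum, Complex.re_sum,
      ← Finset.sum_add_distrib]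
    refine Finset.sum_congr rfl fun i _ => ?_
    simp only [Complex.ofReal_re]
    rcases le_total (lam i) 0 with h | h
    · simp [max_eq_right h, max_eq_left (neg_nonneg.mpr h), ← hlam, abs_of_nonpos h]
    · simp [max_eq_left h, max_eq_right (neg_nonpos.mpr h), ← hlam, abs_of_nonneg h]

end TraceNormIneq
noncomputable section ChannelFacts
open Matrix
variable {d : ℕ}

/-- positivity- and trace-preserving endomorphism. -/
def GoodMap (Φ : Module.End ℂ (Md d)) : Prop :=
  (∀ ρ : Md d, ρ.PosSemidef → (Φ ρ).PosSemidef) ∧ (∀ X : Md d, (Φ X).trace = X.trace)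

lemma psd_sum {ι : Type*} (s : Finset ι) (F : ι → Md d) (h : ∀ i ∈ s, (F i).PosSemidef) :
    (∑ i ∈ s, F i).PosSemidef := by
  classical
  induction s using Finset.induction_on with
  | empty => simpa using Matrix.PosSemidef.zero
  | @insert a s ha ih =>
    rw [Finset.sum_insert ha]
    exact (h a (Finset.mem_insert_self a s)).add
      (ih fun i hi => h i (Finset.mem_insert_of_mem hi))

lemma cp_pos {T : Md d →ₗ[ℂ] Md d} (hT : IsCompletelyPositive T) {ρ : Md d}
    (hρ : ρ.PosSemidef) : (T ρ).PosSemidef := by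
  classical
  have hP : (choiMatrix T).PosSemidef := hT
  obtain ⟨B, hB⟩ : ∃ B : Matrix (Fin d × Fin d) (Fin d × Fin d) ℂ, choiMatrix T = Bᴴ * B :=
    ⟨hP.sqrt, by rw [hP.posSemidef_sqrt.1.eq, ← sq, hP.sq_sqrt]⟩
  set K : Fin d × Fin d → Md d := fun r => Matrix.of (fun p i => star (B r (i, p))) with hK
  have key : ∀ X : Md d, T X = ∑ r : Fin d × Fin d, K r * X * (K r)ᴴ := by
    intro X
    have hXdec : X = ∑ i : Fin d, ∑ k : Fin d, X i k • single i k (1 : ℂ) := by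
      conv_lhs => rw [Matrix.matrix_eq_sum_single X]
      refine Finset.sum_congr rfl fun i _ => Finset.sum_congr rfl fun k _ => ?_
      rw [Matrix.smul_single, smul_eq_mul, mul_one]
    have hchoi : ∀ (i k : Fin d) (p q : Fin d),
        (T (single i k 1)) p q = ∑ r, star (B r (i, p)) * B r (k, q) := by
      intro i k p q
      have h1 : (T (single i k 1)) p q = choiMatrix T (i, p) (k, q) := rfl
      rw [h1, hB, Matrix.mul_apply]
      simp [Matrix.conjTranspose_apply]
    have hlin : T X = ∑ i : Fin d, ∑ k : Fin d, X i k • T (single i k (1 : ℂ)) := by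
      conv_lhs => rw [hXdec]
      rw [map_sum]
      refine Finset.sum_congr rfl fun i _ => ?_
      rw [map_sum]
      refine Finset.sum_congr rfl fun k _ => ?_
      exact T.map_smul _ _
    ext p q
    rw [hlin]
    simp only [Matrix.sum_apply, Matrix.smul_apply, smul_eq_mul]
    have lhs_eq : ∑ i : Fin d, ∑ k : Fin d, X i k * (T (single i k 1)) p q
        = ∑ i : Fin d, ∑ k : Fin d, ∑ r : Fin d × Fin d,
            star (B r (i, p)) * X i k * B r (k, q) := by
      refine Finset.sum_congr rfl fun i _ => Finset.sum_congr rfl fun k _ => ?_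
      rw [hchoi i k p q, Finset.mul_sum]
      refine Finset.sum_congr rfl fun r _ => by ring
    rw [lhs_eq]
    have rhs_eq : ∑ r : Fin d × Fin d, (K r * X * (K r)ᴴ) p q
        = ∑ r : Fin d × Fin d, ∑ k : Fin d, ∑ i : Fin d,
            star (B r (i, p)) * X i k * B r (k, q) := by
      simp only [Matrix.mul_apply, Matrix.conjTranspose_apply, hK,
        Matrix.of_apply, star_star]
      refine Finset.sum_congr rfl fun r _ => Finset.sum_congr rfl fun k _ => ?_
      rw [Finset.sum_mul]
    rw [rhs_eq]
    calc ∑ i : Fin d, ∑ k : Fin d, ∑ r : Fin d × Fin d, star (B r (i, p)) * X i k * B r (k, q)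
        = ∑ i : Fin d, ∑ r : Fin d × Fin d, ∑ k : Fin d,
            star (B r (i, p)) * X i k * B r (k, q) :=
          Finset.sum_congr rfl fun i _ => Finset.sum_comm
      _ = ∑ r : Fin d × Fin d, ∑ i : Fin d, ∑ k : Fin d,
            star (B r (i, p)) * X i k * B r (k, q) := Finset.sum_comm
      _ = ∑ r : Fin d × Fin d, ∑ k : Fin d, ∑ i : Fin d,
            star (B r (i, p)) * X i k * B r (k, q) :=
          Finset.sum_congr rfl fun r _ => Finset.sum_comm
  exact (key ρ) ▸ psd_sum _ _ (fun r _ => hρ.mul_mul_conjTranspose_same (K r))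

end ChannelFacts
noncomputable section GoodMapFacts
open Matrix
variable {d : ℕ}

lemma goodMap_channel {T : Md d →ₗ[ℂ] Md d} (hT : IsQuantumChannel T) :
    GoodMap (T : Module.End ℂ (Md d)) :=
  ⟨fun _ hρ => cp_pos hT.1 hρ, hT.2⟩

lemma conjMap_apply (A X : Md d) : conjMap A X = A * X * Aᴴ := rfl

lemma goodMap_conjMap {A : Md d} (h1 : Aᴴ * A = 1) :
    GoodMap (conjMap A : Module.End ℂ (Md d)) := by
  constructor
  · intro ρ hρ
    rw [conjMap_apply]
    exact hρ.mul_mul_conjTranspose_same A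
  · intro X
    rw [conjMap_apply, Matrix.trace_mul_comm, ← Matrix.mul_assoc, h1, Matrix.one_mul]

lemma goodMap_mul {Φ Ψ : Module.End ℂ (Md d)} (hΦ : GoodMap Φ) (hΨ : GoodMap Ψ) :
    GoodMap (Φ * Ψ) := by
  constructor
  · intro ρ hρ
    exact hΦ.1 _ (hΨ.1 _ hρ)
  · intro X
    calc ((Φ * Ψ) X).trace = (Φ (Ψ X)).trace := rfl
      _ = (Ψ X).trace := hΦ.2 _
      _ = X.trace := hΨ.2 _

lemma goodMap_one : GoodMap (1 : Module.End ℂ (Md d)) :=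
  ⟨fun _ hρ => hρ, fun _ => rfl⟩

lemma goodMap_list_prod (l : List (Module.End ℂ (Md d))) (h : ∀ P ∈ l, GoodMap P) :
    GoodMap l.prod := by
  induction l with
  | nil => simpa using goodMap_one
  | cons a l ih =>
    rw [List.prod_cons]
    exact goodMap_mul (h a List.mem_cons_self)
      (ih fun P hP => h P (List.mem_cons_of_mem a hP))

lemma goodMap_traceNorm_herm_le {Φ : Module.End ℂ (Md d)} (hΦ : GoodMap Φ) {H : Md d}
    (hH : H.IsHermitian) : traceNorm (Φ H) ≤ traceNorm H := by
  obtain ⟨P, N, hP, hN, hPN, htr⟩ := jordan_decomp hH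
  have h1 : Φ H = Φ P - Φ N := by rw [hPN, map_sub]
  calc traceNorm (Φ H) ≤ traceNorm (Φ P) + traceNorm (Φ N) := by
        rw [h1, sub_eq_add_neg]
        exact le_trans (traceNorm_add_le _ _) (by rw [traceNorm_neg])
    _ = (Φ P).trace.re + (Φ N).trace.re := by
        rw [traceNorm_psd (hΦ.1 P hP), traceNorm_psd (hΦ.1 N hN)]
    _ = P.trace.re + N.trace.re := by rw [hΦ.2 P, hΦ.2 N]
    _ = traceNorm H := htr

lemma combo_bound {ι : Type*} [Fintype ι] (P : ι → Module.End ℂ (Md d))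
    (hP : ∀ i, GoodMap (P i)) (c : ι → ℝ) (X : Md d) :
    traceNorm ((∑ i, (c i : ℂ) • P i) X) ≤ 2 * (∑ i, |c i|) * traceNorm X := by
  set Φ : Module.End ℂ (Md d) := ∑ i, (c i : ℂ) • P i with hΦdef
  set H : Md d := (1/2 : ℂ) • (X + Xᴴ) with hHdef
  set K : Md d := (Complex.I/2) • (Xᴴ - X) with hKdef
  have hH : H.IsHermitian := by
    show Hᴴ = H
    rw [hHdef, Matrix.conjTranspose_smul, Matrix.conjTranspose_add,
      Matrix.conjTranspose_conjTranspose]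
    rw [add_comm Xᴴ X]
    congr 1
    rw [Complex.star_def, map_div₀, _root_.map_one, map_ofNat]
  have hK : K.IsHermitian := by
    show Kᴴ = K
    rw [hKdef, Matrix.conjTranspose_smul, Matrix.conjTranspose_sub,
      Matrix.conjTranspose_conjTranspose]
    have h1 : star (Complex.I/2) = -(Complex.I/2) := by
      rw [Complex.star_def, map_div₀, Complex.conj_I, map_ofNat, neg_div]
    rw [h1, neg_smul, ← smul_neg, neg_sub]
  have hX : X = H + Complex.I • K := by
    rw [hHdef, hKdef, smul_smul]
    have h2 : Complex.I * (Complex.I/2) = -(1/2) := by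
      rw [← mul_div_assoc, Complex.I_mul_I]
      norm_num
    rw [h2]
    module
  have hcnonneg : (0:ℝ) ≤ ∑ i, |c i| := Finset.sum_nonneg fun i _ => abs_nonneg _
  have hnorm : ∀ L : Md d, L.IsHermitian → traceNorm (Φ L) ≤ (∑ i, |c i|) * traceNorm L := by
    intro L hL
    have happ : Φ L = ∑ i, (c i : ℂ) • (P i L) := by
      rw [hΦdef]
      simp [LinearMap.sum_apply, LinearMap.smul_apply]
    rw [happ]
    calc traceNorm (∑ i, (c i : ℂ) • (P i L)) ≤ ∑ i, traceNorm ((c i : ℂ) • (P i L)) :=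
          traceNorm_sum_le _ _
      _ = ∑ i, |c i| * traceNorm (P i L) := by
          refine Finset.sum_congr rfl fun i _ => ?_
          rw [traceNorm_smul, Complex.norm_real, Real.norm_eq_abs]
      _ ≤ ∑ i, |c i| * traceNorm L :=
          Finset.sum_le_sum fun i _ => mul_le_mul_of_nonneg_left
            (goodMap_traceNorm_herm_le (hP i) hL) (abs_nonneg _)
      _ = (∑ i, |c i|) * traceNorm L := by rw [Finset.sum_mul]
  have habs_half : ‖(1/2 : ℂ)‖ = 1/2 := by
    rw [norm_div, norm_one]
    norm_num [Complex.norm_two]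
  have hHX : traceNorm H ≤ traceNorm X := by
    rw [hHdef, traceNorm_smul, habs_half]
    have := traceNorm_add_le X Xᴴ
    rw [traceNorm_conjTranspose] at this
    linarith
  have hKX : traceNorm K ≤ traceNorm X := by
    rw [hKdef, traceNorm_smul]
    have habs : ‖Complex.I/2‖ = 1/2 := by
      rw [norm_div, Complex.norm_I]
      norm_num [Complex.norm_two]
    rw [habs]
    have h3 : traceNorm (Xᴴ - X) ≤ traceNorm Xᴴ + traceNorm X := by
      rw [sub_eq_add_neg]
      exact le_trans (traceNorm_add_le _ _) (by rw [traceNorm_neg])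
    rw [traceNorm_conjTranspose] at h3
    linarith
  have happX : Φ X = Φ H + Complex.I • (Φ K) := by
    conv_lhs => rw [hX]
    rw [map_add]
    congr 1
    exact _root_.map_smul Φ Complex.I K
  calc traceNorm (Φ X) ≤ traceNorm (Φ H) + traceNorm (Complex.I • (Φ K)) := by
        rw [happX]
        exact traceNorm_add_le _ _
    _ = traceNorm (Φ H) + traceNorm (Φ K) := by
        rw [traceNorm_smul, Complex.norm_I, one_mul]
    _ ≤ (∑ i, |c i|) * traceNorm H + (∑ i, |c i|) * traceNorm K :=
        add_le_add (hnorm H hH) (hnorm K hK)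
    _ ≤ (∑ i, |c i|) * traceNorm X + (∑ i, |c i|) * traceNorm X :=
        add_le_add (mul_le_mul_of_nonneg_left hHX hcnonneg)
          (mul_le_mul_of_nonneg_left hKX hcnonneg)
    _ = 2 * (∑ i, |c i|) * traceNorm X := by ring

lemma norm11_le_of_bound {Φ : Md d →ₗ[ℂ] Md d} {B : ℝ} (hB : 0 ≤ B)
    (h : ∀ X : Md d, traceNorm (Φ X) ≤ B * traceNorm X) : norm11 Φ ≤ B := by
  apply Real.sSup_le _ hB
  rintro x ⟨X, _, rfl⟩
  rcases eq_or_lt_of_le (traceNorm_nonneg X) with h0 | h0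
  · rw [← h0, div_zero]
    exact hB
  · rw [div_le_iff₀ h0]
    exact h X

end GoodMapFacts
noncomputable section Combinatorics
open Matrix
variable {d : ℕ} {G : Type*} [Group G] [Fintype G]

lemma goodMap_seqStep (U : UnitaryRep G d) {T : Md d →ₗ[ℂ] Md d} (hT : IsQuantumChannel T)
    (g : G) : GoodMap (seqStep U T g) := by
  have h1 : ((U g : Md d))ᴴ * (U g : Md d) = 1 := coe_star_mul_coe (U g)
  have h2 : (((U g : Md d))ᴴ)ᴴ * ((U g : Md d))ᴴ = 1 := by
    rw [Matrix.conjTranspose_conjTranspose]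
    exact coe_mul_coe_star (U g)
  exact goodMap_mul (goodMap_mul (goodMap_conjMap h1) (goodMap_channel hT))
    (goodMap_conjMap h2)

lemma twirl_eq_smul_sum (U : UnitaryRep G d) (T : Md d →ₗ[ℂ] Md d) :
    (twirl U T : Module.End ℂ (Md d)) = (Fintype.card G : ℂ)⁻¹ • ∑ g : G, seqStep U T g := by
  unfold twirl
  congr 1
  have hinv : ∑ g : G, seqStep U T g = ∑ g : G, seqStep U T g⁻¹ :=
    (Fintype.sum_equiv (Equiv.inv G) (fun g => seqStep U T g⁻¹)
      (fun g => seqStep U T g) (fun g => rfl)).symm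
  rw [hinv]
  refine Finset.sum_congr rfl fun g _ => ?_
  have hcoe : (U g⁻¹ : Md d) = (U g : Md d)ᴴ := by
    rw [map_inv]
    rfl
  have hstep : seqStep U T g⁻¹ = conjMap ((U g : Md d))ᴴ ∘ₗ T ∘ₗ conjMap (U g : Md d) := by
    unfold seqStep
    rw [hcoe, Matrix.conjTranspose_conjTranspose]
    rfl
  rw [hstep]

lemma sum_pow_ofFn (A : G → Module.End ℂ (Md d)) (m : ℕ) :
    (∑ g : G, A g) ^ m = ∑ f : Fin m → G, (List.ofFn fun k => A (f k)).prod := by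
  induction m with
  | zero =>
    simp [List.ofFn_zero]
  | succ m ih =>
    rw [pow_succ', ih, Finset.sum_mul_sum, ← Finset.sum_product']
    refine Fintype.sum_equiv (Fin.consEquiv fun _ => G) _ _ fun p => ?_
    rw [List.ofFn_succ]
    simp [Fin.consEquiv, Fin.cons_zero, Fin.cons_succ, List.prod_cons]

/-- The increment map `h ↦ (k ↦ h k · h (k-1)⁻¹)`. -/
def incMap {m : ℕ} (h : Fin m → G) : Fin m → G := fun k =>
  h k * (if _hk : (k : ℕ) = 0 then (1 : G)
      else (h ⟨(k : ℕ) - 1, Nat.lt_of_le_of_lt (Nat.sub_le _ _) k.isLt⟩)⁻¹)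

lemma walkLaw_eq_comp {m : ℕ} (ν : Fin m → G → ℝ) (h : Fin m → G) :
    walkLaw ν h = ∏ k, ν k (incMap h k) := rfl

lemma incMap_injective {m : ℕ} : Function.Injective (incMap (G := G) (m := m)) := by
  intro h1 h2 heq
  have H : ∀ n (hn : n < m), h1 ⟨n, hn⟩ = h2 ⟨n, hn⟩ := by
    intro n
    induction n using Nat.strong_induction_on with
    | _ n ih =>
      intro hn
      have hk := congrFun heq ⟨n, hn⟩
      by_cases h0 : n = 0
      · subst h0
        simpa [incMap] using hk
      · have hlt : n - 1 < n := Nat.sub_lt (Nat.pos_of_ne_zero h0) one_pos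
        have hprev := ih (n - 1) hlt (Nat.lt_of_le_of_lt (Nat.sub_le _ _) hn)
        simp only [incMap, dif_neg h0] at hk
        rw [hprev] at hk
        exact mul_right_cancel hk
  funext k
  have := H k.1 k.2
  simpa using this

lemma incMap_bijective {m : ℕ} : Function.Bijective (incMap (G := G) (m := m)) :=
  Finite.injective_iff_bijective.mp incMap_injective

lemma sum_comp_incMap {m : ℕ} (F : (Fin m → G) → ℝ) :
    ∑ h : Fin m → G, F (incMap h) = ∑ g : Fin m → G, F g :=
  Function.Bijective.sum_comp incMap_bijective F

lemma sum_prob_prod (m : ℕ) (ν : Fin m → G → ℝ) (hν : ∀ k, IsProb (ν k)) :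
    ∑ g : Fin m → G, ∏ k, ν k (g k) = 1 := by
  classical
  rw [← Fintype.prod_sum]
  rw [Finset.prod_congr rfl fun k _ => (hν k).2]
  exact Finset.prod_const_one

lemma abs_prod_sub_le : ∀ (m : ℕ) (ν : Fin m → G → ℝ), (∀ k, IsProb (ν k)) →
    ∑ g : Fin m → G, |(∏ k, ν k (g k)) - ((Fintype.card G : ℝ)⁻¹) ^ m|
      ≤ ∑ k : Fin m, ∑ y : G, |ν k y - (Fintype.card G : ℝ)⁻¹| := by
  intro m
  induction m with
  | zero =>
    intro ν _
    simp
  | succ m ih =>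
    intro ν hν
    classical
    set u : ℝ := (Fintype.card G : ℝ)⁻¹ with hu
    have hu0 : (0:ℝ) ≤ u := by positivity
    have hcard : (Fintype.card G : ℝ) ≠ 0 := Nat.cast_ne_zero.mpr Fintype.card_ne_zero
    have hsplit : ∑ g : Fin (m+1) → G, |(∏ k, ν k (g k)) - u ^ (m+1)|
        = ∑ p : G × (Fin m → G),
            |ν 0 p.1 * (∏ k : Fin m, ν k.succ (p.2 k)) - u * u ^ m| := by
      refine (Fintype.sum_equiv (Fin.consEquiv fun _ => G) _ _ fun p => ?_).symm
      congr 1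
      rw [Fin.prod_univ_succ]
      simp [Fin.consEquiv, Fin.cons_zero, Fin.cons_succ, pow_succ']
    rw [hsplit, Fintype.sum_prod_type]
    have hbound : ∀ (x : G) (f : Fin m → G),
        |ν 0 x * (∏ k : Fin m, ν k.succ (f k)) - u * u ^ m|
          ≤ ν 0 x * |(∏ k : Fin m, ν k.succ (f k)) - u ^ m| + u ^ m * |ν 0 x - u| := by
      intro x f
      set Q := ∏ k : Fin m, ν k.succ (f k) with hQ
      have h1 : ν 0 x * Q - u * u ^ m = ν 0 x * (Q - u ^ m) + (ν 0 x - u) * u ^ m := by ring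
      rw [h1]
      refine le_trans (abs_add_le _ _) ?_
      rw [abs_mul, abs_mul, abs_of_nonneg ((hν 0).1 x), abs_of_nonneg (pow_nonneg hu0 m)]
      linarith [abs_nonneg (Q - u ^ m)]
    have hle1 : ∑ x : G, ∑ f : Fin m → G,
          |ν 0 x * (∏ k : Fin m, ν k.succ (f k)) - u * u ^ m|
        ≤ ∑ x : G, ∑ f : Fin m → G,
            (ν 0 x * |(∏ k : Fin m, ν k.succ (f k)) - u ^ m| + u ^ m * |ν 0 x - u|) :=
      Finset.sum_le_sum fun x _ => Finset.sum_le_sum fun f _ => hbound x f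
    refine le_trans hle1 ?_
    have hcardfun : (Fintype.card (Fin m → G) : ℝ) = (Fintype.card G : ℝ) ^ m := by
      rw [Fintype.card_fun, Fintype.card_fin]
      push_cast
      ring
    have hrw : ∀ x : G, ∑ f : Fin m → G,
          (ν 0 x * |(∏ k : Fin m, ν k.succ (f k)) - u ^ m| + u ^ m * |ν 0 x - u|)
        = ν 0 x * (∑ f : Fin m → G, |(∏ k : Fin m, ν k.succ (f k)) - u ^ m|)
          + |ν 0 x - u| := by
      intro x
      rw [Finset.sum_add_distrib, ← Finset.mul_sum, Finset.sum_const, nsmul_eq_mul]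
      congr 1
      rw [Finset.card_univ, hcardfun, hu]
      rw [← mul_assoc, ← mul_pow, mul_inv_cancel₀ hcard, one_pow, one_mul]
    refine le_trans (le_of_eq (Finset.sum_congr rfl fun x _ => hrw x)) ?_
    rw [Finset.sum_add_distrib, ← Finset.sum_mul, (hν 0).2, one_mul]
    rw [Fin.sum_univ_succ]
    have hIH := ih (fun k => ν k.succ) (fun k => hν k.succ)
    linarith [hIH]

end Combinatorics
set_option maxHeartbeats 1600000

/-- Randomized benchmarking with approximate samples: if each increment law is
`ε_k`-close to Haar in total variation, then the resulting sequence twirl is close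
to the m-th power of the Haar twirl in the `1→1` norm. -/
theorem approx_samples_twirl_bound {d m : ℕ} {G : Type*} [Group G] [Fintype G]
    (U : UnitaryRep G d) (T : Md d →ₗ[ℂ] Md d) (hT : IsQuantumChannel T)
    (ν : Fin m → G → ℝ) (hν : ∀ k, IsProb (ν k))
    (ε : Fin m → ℝ) (hε : ∀ k, tvDist (ν k) (uniformPMF G) ≤ ε k) :
    norm11 (nuTwirl U T (walkLaw ν) - ((twirl U T : Module.End ℂ (Md d)) ^ m)) ≤
      4 * Real.sqrt
        ((Real.log (Fintype.card G) / (1 - (Fintype.card G : ℝ)⁻¹)) *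
          ∑ k : Fin m, ε k) := by
  classical
  set u : ℝ := (Fintype.card G : ℝ)⁻¹ with hu
  set Cst : ℝ := Real.log (Fintype.card G) / (1 - u) with hCst
  set E : ℝ := ∑ k : Fin m, ε k with hE
  have card_pos : 0 < Fintype.card G := Fintype.card_pos
  have hcard : (Fintype.card G : ℝ) ≠ 0 := Nat.cast_ne_zero.mpr Fintype.card_ne_zero
  have hu0 : (0:ℝ) ≤ u := by rw [hu]; positivity
  -- rewrite the power of the twirl
  have hpow : ((twirl U T : Module.End ℂ (Md d)) ^ m)
      = ∑ f : Fin m → G, ((u ^ m : ℝ) : ℂ) •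
          (List.ofFn fun k => seqStep U T (f k)).prod := by
    rw [twirl_eq_smul_sum, smul_pow, sum_pow_ofFn, Finset.smul_sum]
    refine Finset.sum_congr rfl fun f _ => ?_
    congr 1
    rw [hu]
    push_cast
    ring
  have hdiff : nuTwirl U T (walkLaw ν) - ((twirl U T : Module.End ℂ (Md d)) ^ m)
      = ∑ f : Fin m → G, ((walkLaw ν f - u ^ m : ℝ) : ℂ) •
          (List.ofFn fun k => seqStep U T (f k)).prod := by
    rw [hpow]
    unfold nuTwirl
    rw [← Finset.sum_sub_distrib]
    refine Finset.sum_congr rfl fun f _ => ?_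
    have hc : ((walkLaw ν f - u ^ m : ℝ) : ℂ)
        = ((walkLaw ν f : ℝ) : ℂ) - ((u ^ m : ℝ) : ℂ) := by push_cast; ring
    rw [hc]
    exact (sub_smul _ _ _).symm
  set S : ℝ := ∑ f : Fin m → G, |walkLaw ν f - u ^ m| with hS
  have hS0 : 0 ≤ S := Finset.sum_nonneg fun f _ => abs_nonneg _
  have hgood : ∀ f : Fin m → G,
      GoodMap ((List.ofFn fun k => seqStep U T (f k)).prod) := by
    intro f
    refine goodMap_list_prod _ fun P hP => ?_
    rw [List.mem_ofFn] at hP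
    obtain ⟨k, rfl⟩ := hP
    exact goodMap_seqStep U hT _
  have hnorm : norm11 (nuTwirl U T (walkLaw ν) -
      ((twirl U T : Module.End ℂ (Md d)) ^ m)) ≤ 2 * S := by
    rw [hdiff]
    refine norm11_le_of_bound (by linarith : (0:ℝ) ≤ 2 * S) fun X => ?_
    have hcb := combo_bound (fun f : Fin m → G => (List.ofFn fun k => seqStep U T (f k)).prod)
      hgood (fun f => walkLaw ν f - u ^ m) X
    rw [hS]
    exact hcb
  -- total variation estimates
  have hSwalk : S = ∑ g : Fin m → G, |(∏ k, ν k (g k)) - u ^ m| := by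
    rw [hS]
    calc ∑ h : Fin m → G, |walkLaw ν h - u ^ m|
        = ∑ h : Fin m → G, |(∏ k, ν k (incMap h k)) - u ^ m| :=
          Finset.sum_congr rfl fun h _ => by rw [walkLaw_eq_comp]
      _ = ∑ g : Fin m → G, |(∏ k, ν k (g k)) - u ^ m| :=
          sum_comp_incMap (fun g => |(∏ k, ν k (g k)) - u ^ m|)
  have hS1 : S ≤ ∑ k : Fin m, ∑ y : G, |ν k y - u| := by
    rw [hSwalk]
    exact abs_prod_sub_le m ν hν
  have htv : ∀ k, ∑ y : G, |ν k y - u| ≤ 2 * ε k := by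
    intro k
    have h := hε k
    unfold tvDist uniformPMF at h
    rw [hu]
    linarith
  have hε0 : ∀ k, 0 ≤ ε k := by
    intro k
    refine le_trans ?_ (hε k)
    unfold tvDist
    positivity
  have hE0 : 0 ≤ E := Finset.sum_nonneg fun k _ => hε0 k
  have hS2 : S ≤ 2 * E := by
    refine le_trans hS1 ?_
    rw [hE, Finset.mul_sum]
    exact Finset.sum_le_sum fun k _ => htv k
  have hSle2 : S ≤ 2 := by
    have hwalk_nonneg : ∀ f, 0 ≤ walkLaw ν f := fun f =>
      Finset.prod_nonneg fun k _ => (hν k).1 _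
    have hsum_walk : ∑ f : Fin m → G, walkLaw ν f = 1 := by
      calc ∑ h : Fin m → G, walkLaw ν h = ∑ h : Fin m → G, ∏ k, ν k (incMap h k) :=
            Finset.sum_congr rfl fun h _ => walkLaw_eq_comp ν h
        _ = ∑ g : Fin m → G, ∏ k, ν k (g k) := sum_comp_incMap (fun g => ∏ k, ν k (g k))
        _ = 1 := sum_prob_prod m ν hν
    have husum : ∑ _f : Fin m → G, u ^ m = 1 := by
      rw [Finset.sum_const, nsmul_eq_mul, Finset.card_univ]
      have hcardfun : (Fintype.card (Fin m → G) : ℝ) = (Fintype.card G : ℝ) ^ m := by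
        rw [Fintype.card_fun, Fintype.card_fin]
        push_cast
        ring
      rw [hcardfun, hu, ← mul_pow, mul_inv_cancel₀ hcard, one_pow]
    have hb : S ≤ ∑ f : Fin m → G, (walkLaw ν f + u ^ m) := by
      rw [hS]
      refine Finset.sum_le_sum fun f _ => ?_
      refine le_trans (abs_sub _ _) ?_
      rw [abs_of_nonneg (hwalk_nonneg f), abs_of_nonneg (pow_nonneg hu0 m)]
    rw [Finset.sum_add_distrib, hsum_walk, husum] at hb
    linarith
  -- case analysis
  by_cases hG1 : Fintype.card G = 1
  · -- trivial group: S = 0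
    have hsub : Subsingleton G := Fintype.card_le_one_iff_subsingleton.mp (le_of_eq hG1)
    have hu1 : u = 1 := by rw [hu, hG1]; norm_num
    have hνu : ∀ k, ∑ y : G, |ν k y - u| = 0 := by
      intro k
      refine Finset.sum_eq_zero fun y _ => ?_
      have hsum := (hν k).2
      have huniv : (Finset.univ : Finset G) = {y} := by
        refine Finset.eq_singleton_iff_unique_mem.mpr ⟨Finset.mem_univ y, fun x _ => ?_⟩
        exact Subsingleton.elim x y
      rw [huniv, Finset.sum_singleton] at hsum
      simp [hsum, hu1]
    have hS0' : S ≤ 0 :=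
      le_trans hS1 (le_of_eq (Finset.sum_eq_zero fun k _ => hνu k))
    refine le_trans hnorm ?_
    have h20 : 2 * S ≤ 0 := by linarith
    refine le_trans h20 ?_
    positivity
  · have h2 : (2:ℝ) ≤ (Fintype.card G : ℝ) := by
      have : 2 ≤ Fintype.card G := by omega
      exact_mod_cast this
    have hc1 : (1:ℝ) < (Fintype.card G : ℝ) := by linarith
    have hden : (0:ℝ) < 1 - u := by
      rw [hu]
      have : (Fintype.card G : ℝ)⁻¹ < 1 := by
        rw [inv_lt_one_iff₀]
        right
        exact hc1
      linarith
    have hC1 : 1 ≤ Cst := by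
      rw [hCst, le_div_iff₀ hden]
      have hpos : (0:ℝ) < (Fintype.card G : ℝ)⁻¹ := by positivity
      have hlog := Real.log_le_sub_one_of_pos hpos
      rw [Real.log_inv] at hlog
      rw [hu]
      linarith
    have hCpos : (0:ℝ) < Cst := lt_of_lt_of_le one_pos hC1
    by_cases hCE : 1 ≤ Cst * E
    · refine le_trans hnorm ?_
      have h5 : 1 ≤ Real.sqrt (Cst * E) := by
        rw [← Real.sqrt_one]
        exact Real.sqrt_le_sqrt hCE
      linarith
    · push_neg at hCE
      have hEC : E ≤ Cst := by nlinarith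
      have hsq : E ≤ Real.sqrt (Cst * E) := by
        have h1 : E * E ≤ Cst * E := mul_le_mul_of_nonneg_right hEC hE0
        have h6 := Real.sqrt_le_sqrt h1
        rwa [Real.sqrt_mul_self hE0] at h6
      refine le_trans hnorm ?_
      linarith
end

section
/- Let n ≥ 3 and let T : M_d → M_d be a quantum channel covariant with respect to the group MU(d,n) of monomial unitaries with n-th root-of-unity entries: T(UρU†) = U T(ρ) U† for all U ∈ MU(d,n). Then there exist α, β ∈ R such that T(X) = Tr(X)·I/d + α·(X − Δ(X)) + β·(Δ(X) − Tr(X)·I/d), where Δ(X) = Σ_{i=1}^d ⟨i|X|i⟩ |i⟩⟨i| is the diagonal pinching. -/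
open scoped Matrix ComplexOrder
open Matrix

noncomputable section
variable {d : ℕ}

/-- The diagonal pinching `Δ(X) = ∑ᵢ ⟨i|X|i⟩ |i⟩⟨i|` as a linear map. -/
def pinchMap (d : ℕ) : Md d →ₗ[ℂ] Md d where
  toFun X := Matrix.diagonal fun i => X i i
  map_add' X Y := by
    ext i j
    by_cases h : i = j <;> simp [Matrix.diagonal, h]
  map_smul' c X := by
    ext i j
    by_cases h : i = j <;> simp [Matrix.diagonal, h]

/-- The map `X ↦ Tr(X)·I/d` as a linear map. -/
def traceProj (d : ℕ) : Md d →ₗ[ℂ] Md d :=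
  LinearMap.smulRight (Matrix.traceLinearMap (Fin d) ℂ ℂ) (((d : ℂ))⁻¹ • (1 : Md d))

/-- The MU(d,n)-covariant map
`T(X) = Tr(X)·I/d + α(X − Δ(X)) + β(Δ(X) − Tr(X)·I/d)`. -/
def monomialMap (d : ℕ) (α β : ℝ) : Md d →ₗ[ℂ] Md d :=
  traceProj d + (α : ℂ) • (LinearMap.id - pinchMap d) + (β : ℂ) • (pinchMap d - traceProj d)

/-- Membership in `MU(d,n)`: a product `DP` of a diagonal matrix whose entries are
n-th roots of unity and a permutation matrix. -/
def MemMU (d n : ℕ) (V : Md d) : Prop :=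
  ∃ (π : Equiv.Perm (Fin d)) (φ : Fin d → ℂ), (∀ i, φ i ^ n = 1) ∧
    V = Matrix.of fun i j => if i = π j then φ i else 0

end

section Helpers

open Matrix

lemma exists_perm_two {α : Type*} [DecidableEq α] {x y i j : α} (hxy : x ≠ y) (hij : i ≠ j) :
    ∃ π : Equiv.Perm α, π x = i ∧ π y = j := by
  refine ⟨Equiv.swap x i * Equiv.swap y (Equiv.swap x i j), ?_, ?_⟩
  · have hx1 : x ≠ Equiv.swap x i j := by
      intro h
      have h2 := congrArg (Equiv.swap x i) h
      rw [Equiv.swap_apply_left, Equiv.swap_apply_self] at h2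
      exact hij h2
    rw [Equiv.Perm.mul_apply, Equiv.swap_apply_of_ne_of_ne hxy hx1, Equiv.swap_apply_left]
  · rw [Equiv.Perm.mul_apply, Equiv.swap_apply_left, Equiv.swap_apply_self]

lemma monomialMap_apply (d : ℕ) (α β : ℝ) (X : Md d) (k l : Fin d) :
    monomialMap d α β X k l =
      X.trace * ((d:ℂ))⁻¹ * (if k = l then 1 else 0)
      + (α:ℂ) * (X k l - if k = l then X k k else 0)
      + (β:ℂ) * ((if k = l then X k k else 0)
          - X.trace * ((d:ℂ))⁻¹ * (if k = l then 1 else 0)) := by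
  simp only [monomialMap, traceProj, pinchMap, LinearMap.add_apply, LinearMap.smul_apply,
    LinearMap.sub_apply, LinearMap.id_apply, LinearMap.smulRight_apply,
    Matrix.traceLinearMap_apply, Matrix.add_apply, Matrix.sub_apply, Matrix.smul_apply,
    Matrix.one_apply, smul_eq_mul, Matrix.diagonal_apply, LinearMap.coe_mk, AddHom.coe_mk]
  ring

lemma perm_conj {d : ℕ} (π : Equiv.Perm (Fin d)) (X : Md d) :
    (Matrix.of fun a b => if a = π b then (1:ℂ) else 0) * X *
      (Matrix.of fun a b => if a = π b then (1:ℂ) else 0)ᴴ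
      = X.submatrix π.symm π.symm := by
  have h1 : (Matrix.of fun a b => if a = π b then (1:ℂ) else 0)
      = (π⁻¹ : Equiv.Perm (Fin d)).toPEquiv.toMatrix := by
    ext a b
    rw [PEquiv.toMatrix_toPEquiv_eq]
    simp only [Matrix.submatrix_apply, id_eq, Matrix.one_apply, Matrix.of_apply]
    by_cases h : a = π b
    · simp [h]
    · rw [if_neg h, if_neg (fun hh => h (by rw [← hh]; simp))]
  have h2 : (Matrix.of fun a b => if a = π b then (1:ℂ) else 0)ᴴ
      = π.toPEquiv.toMatrix := by
    ext a b
    rw [Matrix.conjTranspose_apply, PEquiv.toMatrix_toPEquiv_eq]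
    simp only [Matrix.submatrix_apply, id_eq, Matrix.one_apply, Matrix.of_apply, apply_ite (starRingEnd ℂ), _root_.map_one, map_zero]
    simp [eq_comm]
  rw [h2, h1, PEquiv.toMatrix_toPEquiv_mul, PEquiv.mul_toMatrix_toPEquiv,
    Matrix.submatrix_submatrix]
  rfl

lemma trace_stdBasis (d : ℕ) (i : Fin d) :
    (Matrix.single i i (1:ℂ)).trace = 1 := by
  simp [Matrix.trace, Matrix.diag, Matrix.single]

end Helpers

/-- Structure of channels covariant w.r.t. monomial unitaries: any quantum channel
covariant under `MU(d,n)` with `n ≥ 3` has the two-parameter form. -/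
theorem covariant_eq_monomialMap {d n : ℕ} (hn : 3 ≤ n)
    (T : Md d →ₗ[ℂ] Md d) (hT : IsQuantumChannel T)
    (hcov : ∀ V : Md d, MemMU d n V → ∀ X : Md d, T (V * X * Vᴴ) = V * T X * Vᴴ) :
    ∃ α β : ℝ, T = monomialMap d α β := by
  classical
  set M : Fin d → Fin d → Md d := fun i j => T (Matrix.single i j 1) with hM
  have hMd : ∀ i j : Fin d, T (Matrix.single i j 1) = M i j := fun _ _ => rfl
  -- the primitive root ω
  have hn0 : n ≠ 0 := by omega
  set ω : ℂ := Complex.exp (2 * Real.pi * Complex.I / n) with hω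
  have hprim : IsPrimitiveRoot ω n := Complex.isPrimitiveRoot_exp n hn0
  have hωn : ω ^ n = 1 := hprim.pow_eq_one
  have hω1 : ω ≠ 1 := hprim.ne_one (by omega)
  have hωc : ω * (starRingEnd ℂ) ω = 1 := by
    rw [hω, ← Complex.exp_conj, ← Complex.exp_add]
    have h0 : 2 * (Real.pi:ℂ) * Complex.I / n
        + (starRingEnd ℂ) (2 * (Real.pi:ℂ) * Complex.I / n) = 0 := by
      simp only [map_div₀, _root_.map_mul, Complex.conj_I, Complex.conj_ofReal, map_ofNat,
        Complex.conj_natCast]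
      ring
    rw [h0, Complex.exp_zero]
  have hωc1 : (starRingEnd ℂ) ω ≠ 1 := by
    intro h
    have h2 : ω = 1 := by
      have h3 := congrArg (starRingEnd ℂ) h
      simpa using h3
    exact hω1 h2
  have hωne : ω ≠ (starRingEnd ℂ) ω := by
    intro h
    refine hprim.pow_ne_one_of_pos_of_lt (l := 2) (by norm_num) (by omega) ?_
    rw [pow_two]
    nth_rewrite 2 [h]
    exact hωc
  -- diagonal covariance
  have diagCov : ∀ (φ : Fin d → ℂ), (∀ m, φ m ^ n = 1) → ∀ i j k l,
      φ i * (starRingEnd ℂ) (φ j) * M i j k l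
        = φ k * (starRingEnd ℂ) (φ l) * M i j k l := by
    intro φ hφ i j k l
    have hmem : MemMU d n (Matrix.diagonal φ) := ⟨1, φ, hφ, by
      ext a b
      simp [Matrix.diagonal]
      exact if_congr Iff.rfl rfl rfl⟩
    have h := hcov _ hmem (Matrix.single i j 1)
    have hL : Matrix.diagonal φ * Matrix.single i j 1 * (Matrix.diagonal φ)ᴴ
        = (φ i * (starRingEnd ℂ) (φ j)) • Matrix.single i j 1 := by
      rw [Matrix.diagonal_conjTranspose]
      ext a b
      rw [Matrix.mul_diagonal, Matrix.diagonal_mul]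
      simp only [Matrix.smul_apply, smul_eq_mul, Matrix.single, Matrix.of_apply,
        Pi.star_apply, RCLike.star_def]
      by_cases ha : i = a <;> by_cases hb : j = b
      · subst ha; subst hb; simp only [and_self, if_true]; ring
      · simp [ha, hb]
      · simp [ha, hb]
      · simp [ha, hb]
    rw [hL, _root_.map_smul] at h
    have h2 := congrFun (congrFun h k) l
    rw [Matrix.smul_apply, smul_eq_mul, Matrix.diagonal_conjTranspose, Matrix.mul_diagonal,
      Matrix.diagonal_mul] at h2
    show φ i * (starRingEnd ℂ) (φ j) * T (Matrix.single i j 1) k l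
      = φ k * (starRingEnd ℂ) (φ l) * T (Matrix.single i j 1) k l
    rw [h2]
    simp only [Pi.star_apply, RCLike.star_def]
    ring
  -- permutation covariance
  have permCov : ∀ (π : Equiv.Perm (Fin d)) (i j k l : Fin d),
      M (π i) (π j) (π k) (π l) = M i j k l := by
    intro π i j k l
    have hmem : MemMU d n (Matrix.of fun a b => if a = π b then (1:ℂ) else 0) :=
      ⟨π, fun _ => 1, fun _ => one_pow n, by ext a b; simp⟩
    have h := hcov _ hmem (Matrix.single i j 1)
    rw [perm_conj] at h
    have hE : (Matrix.single i j (1:ℂ)).submatrix π.symm π.symm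
        = Matrix.single (π i) (π j) 1 := by
      ext a b
      simp only [Matrix.submatrix_apply, Matrix.single, Matrix.of_apply]
      congr 1
      rw [eq_iff_iff]
      constructor
      · rintro ⟨h1, h2⟩
        exact ⟨by rw [h1]; simp, by rw [h2]; simp⟩
      · rintro ⟨h1, h2⟩
        exact ⟨by rw [← h1]; simp, by rw [← h2]; simp⟩
    rw [hE] at h
    have h2 := congrFun (congrFun h (π k)) (π l)
    rw [perm_conj, Matrix.submatrix_apply, Equiv.symm_apply_apply,
      Equiv.symm_apply_apply] at h2
    exact h2
  -- vanishing of off-pattern entries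
  have F2 : ∀ i k l : Fin d, k ≠ l → M i i k l = 0 := by
    intro i k l hkl
    by_contra hMne
    by_cases hk : k = i
    · subst hk
      have h := diagCov (fun m => if m = l then ω else 1)
        (fun m => by split <;> simp [hωn]) k k k l
      have e := mul_right_cancel₀ hMne h
      rw [if_neg hkl, if_pos (rfl : l = l), _root_.map_one] at e
      simp only [one_mul, mul_one] at e
      exact hωc1 e.symm
    · have h := diagCov (fun m => if m = k then ω else 1)
        (fun m => by split <;> simp [hωn]) i i k l
      have e := mul_right_cancel₀ hMne h
      rw [if_neg (show ¬ i = k from fun hh => hk hh.symm), if_pos (rfl : k = k),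
        if_neg (show ¬ l = k from fun hh => hkl hh.symm), _root_.map_one] at e
      simp only [one_mul, mul_one] at e
      exact hω1 e.symm
  have F1 : ∀ i j k l : Fin d, i ≠ j → ¬(k = i ∧ l = j) → M i j k l = 0 := by
    intro i j k l hij hne
    by_contra hMne
    have h1 := diagCov (fun m => if m = i then ω else 1)
      (fun m => by split <;> simp [hωn]) i j k l
    have h2 := diagCov (fun m => if m = j then ω else 1)
      (fun m => by split <;> simp [hωn]) i j k l
    have e1 := mul_right_cancel₀ hMne h1
    have e2 := mul_right_cancel₀ hMne h2
    rw [if_pos (rfl : i = i), if_neg (show ¬ j = i from fun hh => hij hh.symm),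
      _root_.map_one, mul_one] at e1
    rw [if_neg hij, if_pos (rfl : j = j), one_mul] at e2
    have hki : k = i := by
      by_contra hk
      rw [if_neg hk, one_mul] at e1
      by_cases hl : l = i
      · rw [if_pos hl] at e1; exact hωne e1
      · rw [if_neg hl, _root_.map_one] at e1; exact hω1 e1
    have hlj : l = j := by
      by_contra hl
      rw [if_neg hl, _root_.map_one, mul_one] at e2
      by_cases hk2 : k = j
      · rw [if_pos hk2] at e2; exact hωne e2.symm
      · rw [if_neg hk2] at e2; exact hωc1 e2
    exact hne ⟨hki, hlj⟩
  -- case split on d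
  rcases Nat.lt_or_ge d 2 with hd | hd
  · interval_cases d
    · exact ⟨0, 0, LinearMap.ext fun X => by ext a b; exact a.elim0⟩
    · refine ⟨0, 0, LinearMap.ext fun X => ?_⟩
      have hX : X = X 0 0 • Matrix.single (0 : Fin 1) 0 1 := by
        ext a b
        obtain rfl : a = 0 := Subsingleton.elim a 0
        obtain rfl : b = 0 := Subsingleton.elim b 0
        simp [Matrix.single]
      have htr1 : (M 0 0) 0 0 = 1 := by
        have h := hT.2 (Matrix.single (0 : Fin 1) 0 1)
        rw [trace_stdBasis, hMd] at h
        have h4 : (M 0 0).trace = (M 0 0) 0 0 := by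
          simp [Matrix.trace, Matrix.diag]
        rw [h4] at h
        exact h
      rw [hX, _root_.map_smul, _root_.map_smul]
      ext a b
      obtain rfl : a = 0 := Subsingleton.elim a 0
      obtain rfl : b = 0 := Subsingleton.elim b 0
      rw [Matrix.smul_apply, Matrix.smul_apply, hMd, htr1, monomialMap_apply, trace_stdBasis]
      norm_num [Matrix.single_apply_same]
  · -- main case: d ≥ 2
    set i0 : Fin d := ⟨0, by omega⟩ with hi0
    set i1 : Fin d := ⟨1, by omega⟩ with hi1
    have h01 : i0 ≠ i1 := by simp [hi0, hi1, Fin.ext_iff]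
    set a : ℂ := M i0 i0 i0 i0 with ha'
    set c : ℂ := M i0 i0 i1 i1 with hc'
    set b : ℂ := M i0 i1 i0 i1 with hb'
    have hA : ∀ i : Fin d, M i i i i = a := by
      intro i
      obtain ⟨j, hj⟩ : ∃ j, i ≠ j :=
        ⟨if i = i0 then i1 else i0, by split <;> simp_all⟩
      obtain ⟨π, hπ0, hπ1⟩ := exists_perm_two h01 hj
      have h := permCov π i0 i0 i0 i0
      rwa [hπ0] at h
    have hC : ∀ i j : Fin d, i ≠ j → M i i j j = c := by
      intro i j hij
      obtain ⟨π, hπ0, hπ1⟩ := exists_perm_two h01 hij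
      have h := permCov π i0 i0 i1 i1
      rwa [hπ0, hπ1] at h
    have hB : ∀ i j : Fin d, i ≠ j → M i j i j = b := by
      intro i j hij
      obtain ⟨π, hπ0, hπ1⟩ := exists_perm_two h01 hij
      have h := permCov π i0 i1 i0 i1
      rwa [hπ0, hπ1] at h
    have hd0 : (d : ℂ) ≠ 0 := by
      simp only [ne_eq, Nat.cast_eq_zero]; omega
    -- trace identity
    have htr : a + ((d:ℂ) - 1) * c = 1 := by
      have h := hT.2 (Matrix.single i0 i0 1)
      rw [trace_stdBasis, hMd] at h
      have hsum : (M i0 i0).trace = ∑ k : Fin d, M i0 i0 k k := rfl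
      rw [hsum] at h
      have hterm : ∀ k : Fin d, M i0 i0 k k = if k = i0 then a else c := by
        intro k
        by_cases hk : k = i0
        · subst hk; simp [ha']
        · rw [if_neg hk]; exact hC i0 k (fun hh => hk hh.symm)
      rw [Finset.sum_congr rfl (fun k _ => hterm k)] at h
      rw [← Finset.add_sum_erase _ _ (Finset.mem_univ i0), if_pos rfl] at h
      rw [Finset.sum_congr rfl (fun k hk =>
        if_neg (Finset.ne_of_mem_erase hk))] at h
      rw [Finset.sum_const, Finset.card_erase_of_mem (Finset.mem_univ i0),
        Finset.card_univ, Fintype.card_fin, nsmul_eq_mul] at h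
      rw [Nat.cast_sub (by omega), Nat.cast_one] at h
      linear_combination h
    -- hermiticity / realness
    have hconj : ∀ p q : Fin d × Fin d,
        (starRingEnd ℂ) (M q.1 p.1 q.2 p.2) = M p.1 q.1 p.2 q.2 := by
      intro p q
      have h := congrFun (congrFun hT.1.1 p) q
      rw [Matrix.conjTranspose_apply] at h
      exact h
    have hra : (starRingEnd ℂ) a = a := hconj (i0, i0) (i0, i0)
    have hrc : (starRingEnd ℂ) c = c := hconj (i0, i1) (i0, i1)
    have hrb : (starRingEnd ℂ) b = b := by
      have h : (starRingEnd ℂ) (M i1 i0 i1 i0) = M i0 i1 i0 i1 := hconj (i0, i0) (i1, i1)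
      rw [hB i1 i0 (Ne.symm h01)] at h
      exact h
    have hbre : ((b.re : ℝ) : ℂ) = b := Complex.conj_eq_iff_re.mp hrb
    have hare : ((a.re : ℝ) : ℂ) = a := Complex.conj_eq_iff_re.mp hra
    have hcre : ((c.re : ℝ) : ℂ) = c := Complex.conj_eq_iff_re.mp hrc
    refine ⟨b.re, (a - c).re, ?_⟩
    have hβre : (((a - c).re : ℝ) : ℂ) = a - c := by
      rw [Complex.sub_re]
      push_cast
      rw [hare, hcre]
    have key : ∀ i j : Fin d, T (Matrix.single i j 1)
        = monomialMap d b.re (a - c).re (Matrix.single i j 1) := by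
      intro i j
      ext k l
      rw [hMd, monomialMap_apply, hbre, hβre]
      by_cases hij : i = j
      · subst hij
        rw [trace_stdBasis]
        by_cases hkl : k = l
        · subst hkl
          rw [if_pos rfl, if_pos rfl]
          by_cases hki : k = i
          · subst hki
            rw [hA k, Matrix.single_apply_same]
            field_simp
            linear_combination htr
          · rw [hC i k (fun hh => hki hh.symm),
              Matrix.single_apply_of_ne (h := fun hh => hki hh.1.symm)]
            field_simp
            linear_combination htr
        · rw [F2 i k l hkl, if_neg hkl, if_neg hkl,
Matrix.single_apply_of_ne (h := fun hh => hkl (hh.1.symm.trans hh.2))]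
          ring
      · have htr0 : (Matrix.single i j (1:ℂ)).trace = 0 := by
          simp only [Matrix.trace, Matrix.diag, Matrix.single, Matrix.of_apply]
          rw [Finset.sum_eq_zero]
          intro x _
          rw [if_neg]
          rintro ⟨rfl, rfl⟩
          exact hij rfl
        rw [htr0]
        have hdiag0 : ∀ m : Fin d, Matrix.single i j (1:ℂ) m m = 0 :=
fun m => Matrix.single_apply_of_ne i j 1 (h := fun hh => hij (hh.1.trans hh.2.symm))
        by_cases hkil : k = i ∧ l = j
        · obtain ⟨rfl, rfl⟩ := hkil
          rw [hB k l hij, Matrix.single_apply_same]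
          simp only [if_neg hij]
          ring
        · rw [F1 i j k l hij hkil,
Matrix.single_apply_of_ne (h := fun hh => hkil ⟨hh.1.symm, hh.2.symm⟩)]
          by_cases hkl : k = l
          · subst hkl
            rw [if_pos rfl, if_pos rfl, hdiag0 k]
            ring
          · rw [if_neg hkl, if_neg hkl]
            ring
    apply LinearMap.ext
    intro X
    conv_lhs => rw [Matrix.matrix_eq_sum_single X]
    conv_rhs => rw [Matrix.matrix_eq_sum_single X]
    rw [map_sum, map_sum]
    refine Finset.sum_congr rfl fun i _ => ?_
    rw [map_sum, map_sum]
    refine Finset.sum_congr rfl fun j _ => ?_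
    have hsm : Matrix.single i j (X i j) = X i j • Matrix.single i j 1 := by
      rw [Matrix.smul_single, smul_eq_mul, mul_one]
    rw [hsm, _root_.map_smul, _root_.map_smul, key]
end
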